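/- Let Z be a proper geodesic δ-hyperbolic space, x ∈ Z, and let σ₁, σ₂: [0,∞) → Z be geodesic rays from x with distinct endpoints at infinity. Then for any point w ∈ Z lying on a bi-infinite geodesic between σ₁(∞) and σ₂(∞), one has ⟨σ₁(∞), σ₂(∞)⟩_x − 42δ ≤ (β_{σ₁}(x,w) + β_{σ₂}(x,w))/2 ≤ ⟨σ₁(∞), σ₂(∞)⟩_x. -/

import Mathlib

open Filter Metric Set

noncomputable def gromovProd {Z : Type*} [MetricSpace Z] (x y z : Z) : ℝ :=
  (dist x y + dist x z - dist y z) / 2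

/-- `Z` is δ-hyperbolic in the Gromov product sense. -/
def IsDeltaHyperbolic (Z : Type*) [MetricSpace Z] (δ : ℝ) : Prop :=
  ∀ w x y z : Z, min (gromovProd x w y) (gromovProd x y z) - δ ≤ gromovProd x w z

/-- `f` parametrizes a geodesic segment from `x` to `y` by arclength on `[0, dist x y]`. -/
def IsGeodesicSegment {Z : Type*} [MetricSpace Z] (f : ℝ → Z) (x y : Z) : Prop :=
  f 0 = x ∧ f (dist x y) = y ∧
    ∀ s ∈ Set.Icc (0:ℝ) (dist x y), ∀ t ∈ Set.Icc (0:ℝ) (dist x y),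
      dist (f s) (f t) = |s - t|

/-- `Z` is a geodesic metric space. -/
def IsGeodesicSpace (Z : Type*) [MetricSpace Z] : Prop :=
  ∀ x y : Z, ∃ f : ℝ → Z, IsGeodesicSegment f x y

/-- The image of the geodesic segment `[x,y]` parametrized by `f`. -/
def segImage {Z : Type*} [MetricSpace Z] (f : ℝ → Z) (x y : Z) : Set Z :=
  f '' Set.Icc 0 (dist x y)

/-- A geodesic ray: an isometric embedding of `[0,∞)`. -/
def IsGeodesicRay {Z : Type*} [MetricSpace Z] (σ : ℝ → Z) : Prop :=
  ∀ s t : ℝ, 0 ≤ s → 0 ≤ t → dist (σ s) (σ t) = |s - t|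

/-- A bi-infinite geodesic: an isometric embedding of `ℝ`. -/
def IsBiInfGeodesic {Z : Type*} [MetricSpace Z] (γ : ℝ → Z) : Prop :=
  ∀ s t : ℝ, dist (γ s) (γ t) = |s - t|

/-- Two geodesic rays are asymptotic (same endpoint at infinity):
their images are at finite Hausdorff distance. -/
def AsymptoticRays {Z : Type*} [MetricSpace Z] (σ σ' : ℝ → Z) : Prop :=
  EMetric.hausdorffEdist (σ '' Set.Ici 0) (σ' '' Set.Ici 0) ≠ ⊤

/-- Extended Gromov product (with respect to `x`) of the two boundary points
represented by the geodesic rays `σ`, `σ'`. -/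
noncomputable def extGP {Z : Type*} [MetricSpace Z] (x : Z) (σ σ' : ℝ → Z) : EReal :=
  Filter.liminf (fun p : ℝ × ℝ => ((gromovProd x (σ p.1) (σ' p.2) : ℝ) : EReal))
    (Filter.atTop ×ˢ Filter.atTop)

/-- Extended Gromov product (with respect to `x`) of a point `y ∈ Z` and the boundary
point represented by the geodesic ray `σ`. -/
noncomputable def ptRayGP {Z : Type*} [MetricSpace Z] (x y : Z) (σ : ℝ → Z) : EReal :=
  Filter.liminf (fun t : ℝ => ((gromovProd x y (σ t) : ℝ) : EReal)) Filter.atTop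

/-- The visual quasi-metric `d_x(ξ,η) = exp(-2⟨ξ,η⟩_x)` on the Gromov boundary,
for boundary points represented by geodesic rays. -/
noncomputable def visDist {Z : Type*} [MetricSpace Z] (x : Z) (σ σ' : ℝ → Z) : ℝ :=
  if extGP x σ σ' = ⊤ then 0 else Real.exp (-2 * (extGP x σ σ').toReal)

/-- For geodesic rays `σ₁, σ₂` from `x` with distinct endpoints at infinity and a point
`w` on a bi-infinite geodesic between the endpoints,
`⟨σ₁(∞),σ₂(∞)⟩ₓ − 42δ ≤ (β_{σ₁}(x,w) + β_{σ₂}(x,w))/2 ≤ ⟨σ₁(∞),σ₂(∞)⟩ₓ`. -/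
theorem stmt14 {Z : Type*} [MetricSpace Z] [ProperSpace Z] {δ : ℝ}
    (hgeo : IsGeodesicSpace Z) (hhyp : IsDeltaHyperbolic Z δ) (x : Z)
    (σ₁ σ₂ : ℝ → Z) (h1 : IsGeodesicRay σ₁) (h2 : IsGeodesicRay σ₂)
    (h10 : σ₁ 0 = x) (h20 : σ₂ 0 = x)
    (hne : extGP x σ₁ σ₂ ≠ ⊤)
    (γ : ℝ → Z) (hγ : IsBiInfGeodesic γ)
    (hneg : AsymptoticRays (fun t => γ (-t)) σ₁)
    (hpos : AsymptoticRays (fun t => γ t) σ₂)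
    (w : Z) (hw : w ∈ Set.range γ)
    (b₁ b₂ : ℝ)
    (hb₁ : Filter.Tendsto (fun t => dist x (σ₁ t) - dist w (σ₁ t)) Filter.atTop (nhds b₁))
    (hb₂ : Filter.Tendsto (fun t => dist x (σ₂ t) - dist w (σ₂ t)) Filter.atTop (nhds b₂)) :
    extGP x σ₁ σ₂ - ((42 * δ : ℝ) : EReal) ≤ (((b₁ + b₂) / 2 : ℝ) : EReal) ∧
      (((b₁ + b₂) / 2 : ℝ) : EReal) ≤ extGP x σ₁ σ₂ := by
  obtain ⟨a, rfl⟩ := hw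
  have hδ : 0 ≤ δ := by
    have h := hhyp x x x x
    simp only [gromovProd, dist_self] at h
    norm_num at h
    linarith
  -- Notation for constants
  set D := dist x (γ a) with hDdef
  set hd₁ := EMetric.hausdorffEdist ((fun t => γ (-t)) '' Set.Ici 0) (σ₁ '' Set.Ici 0) with hd1def
  set hd₂ := EMetric.hausdorffEdist ((fun t => γ t) '' Set.Ici 0) (σ₂ '' Set.Ici 0) with hd2def
  set H₁ := (hd₁ + 1).toReal with hH1def
  set H₂ := (hd₂ + 1).toReal with hH2def
  have hH₁0 : 0 ≤ H₁ := ENNReal.toReal_nonneg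
  have hH₂0 : 0 ≤ H₂ := ENNReal.toReal_nonneg
  have hD0 : 0 ≤ D := dist_nonneg
  set S := D + max H₁ H₂ + |a| + 2 * δ + 1 with hSdef
  have hmax1 : H₁ ≤ max H₁ H₂ := le_max_left _ _
  have hmax2 : H₂ ≤ max H₁ H₂ := le_max_right _ _
  have hmax0 : 0 ≤ max H₁ H₂ := le_trans hH₁0 hmax1
  have habs0 : 0 ≤ |a| := abs_nonneg a
  -- Key geometric claim
  have key : ∀ s t : ℝ, S ≤ s → S ≤ t →
      gromovProd x (σ₁ s) (σ₂ t) ≤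
        ((dist x (σ₁ s) - dist (γ a) (σ₁ s)) + (dist x (σ₂ t) - dist (γ a) (σ₂ t))) / 2
          + 2 * δ := by
    intro s t hs ht
    have hs0 : (0:ℝ) ≤ s := by simp only [hSdef] at hs; linarith
    have ht0 : (0:ℝ) ≤ t := by simp only [hSdef] at ht; linarith
    -- find u with γ(-u) close to σ₁ s
    obtain ⟨u, hu0, hdu⟩ : ∃ u : ℝ, 0 ≤ u ∧ dist (σ₁ s) (γ (-u)) ≤ H₁ := by
      have hmem : σ₁ s ∈ σ₁ '' Set.Ici 0 := ⟨s, hs0, rfl⟩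
      have hinf : EMetric.infEdist (σ₁ s) ((fun t => γ (-t)) '' Set.Ici 0) ≤ hd₁ := by
        have h := EMetric.infEdist_le_hausdorffEdist_of_mem
          (t := (fun t => γ (-t)) '' Set.Ici 0) hmem
        rwa [EMetric.hausdorffEdist_comm] at h
      have hlt : EMetric.infEdist (σ₁ s) ((fun t => γ (-t)) '' Set.Ici 0) < hd₁ + 1 :=
        lt_of_le_of_lt hinf (ENNReal.lt_add_right hneg one_ne_zero)
      obtain ⟨y, hy, hey⟩ := EMetric.infEdist_lt_iff.mp hlt
      obtain ⟨u, hu, rfl⟩ := hy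
      refine ⟨u, hu, ?_⟩
      rw [dist_edist]
      exact ENNReal.toReal_mono (by exact ENNReal.add_ne_top.mpr ⟨hneg, ENNReal.one_ne_top⟩)
        hey.le
    -- find v with γ v close to σ₂ t
    obtain ⟨v, hv0, hdv⟩ : ∃ v : ℝ, 0 ≤ v ∧ dist (σ₂ t) (γ v) ≤ H₂ := by
      have hmem : σ₂ t ∈ σ₂ '' Set.Ici 0 := ⟨t, ht0, rfl⟩
      have hinf : EMetric.infEdist (σ₂ t) ((fun t => γ t) '' Set.Ici 0) ≤ hd₂ := by
        have h := EMetric.infEdist_le_hausdorffEdist_of_mem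
          (t := (fun t => γ t) '' Set.Ici 0) hmem
        rwa [EMetric.hausdorffEdist_comm] at h
      have hlt : EMetric.infEdist (σ₂ t) ((fun t => γ t) '' Set.Ici 0) < hd₂ + 1 :=
        lt_of_le_of_lt hinf (ENNReal.lt_add_right hpos one_ne_zero)
      obtain ⟨y, hy, hey⟩ := EMetric.infEdist_lt_iff.mp hlt
      obtain ⟨v, hv, rfl⟩ := hy
      refine ⟨v, hv, ?_⟩
      rw [dist_edist]
      exact ENNReal.toReal_mono (by exact ENNReal.add_ne_top.mpr ⟨hpos, ENNReal.one_ne_top⟩)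
        hey.le
    -- basic distance facts
    have dxs : dist x (σ₁ s) = s := by
      have h := h1 0 s le_rfl hs0
      rw [h10] at h
      rw [h, zero_sub, abs_neg, abs_of_nonneg hs0]
    have dxt : dist x (σ₂ t) = t := by
      have h := h2 0 t le_rfl ht0
      rw [h20] at h
      rw [h, zero_sub, abs_neg, abs_of_nonneg ht0]
    have dws : s - D ≤ dist (γ a) (σ₁ s) := by
      have h := dist_triangle x (γ a) (σ₁ s)
      rw [dxs] at h; linarith
    have dwt : t - D ≤ dist (γ a) (σ₂ t) := by
      have h := dist_triangle x (γ a) (σ₂ t)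
      rw [dxt] at h; linarith
    have dwu : dist (γ a) (γ (-u)) = |a + u| := by
      rw [hγ a (-u)]; congr 1; ring
    have dwv : dist (γ a) (γ v) = |a - v| := hγ a v
    have hcs : dist (γ a) (σ₁ s) ≤ |a + u| + H₁ := by
      have h := dist_triangle (γ a) (γ (-u)) (σ₁ s)
      rw [dwu] at h
      have h2' : dist (γ (-u)) (σ₁ s) ≤ H₁ := by rwa [dist_comm] at hdu
      linarith
    have hct : dist (γ a) (σ₂ t) ≤ |a - v| + H₂ := by
      have h := dist_triangle (γ a) (γ v) (σ₂ t)
      rw [dwv] at h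
      have h2' : dist (γ v) (σ₂ t) ≤ H₂ := by rwa [dist_comm] at hdv
      linarith
    have hSs : D + max H₁ H₂ + |a| + 2 * δ + 1 ≤ s := hs
    have hSt : D + max H₁ H₂ + |a| + 2 * δ + 1 ≤ t := ht
    have habs1 : |a| + 2 * δ + 1 ≤ |a + u| := by linarith
    have habs2 : |a| + 2 * δ + 1 ≤ |a - v| := by linarith
    have hau : 0 < a + u := by
      rcases le_or_gt (a + u) 0 with h | h
      · have h' : |a + u| = -(a + u) := abs_of_nonpos h
        have h'' := neg_abs_le a
        linarith
      · exact h
    have hva : 0 < v - a := by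
      rcases le_or_gt (v - a) 0 with h | h
      · have h' : |a - v| = a - v := by
          rw [abs_of_nonneg]; linarith
        have h'' := le_abs_self a
        linarith
      · exact h
    -- Gromov products at w = γ a
    set A := gromovProd (γ a) (γ (-u)) (σ₁ s) with hAdef
    set B := gromovProd (γ a) (σ₁ s) (σ₂ t) with hBdef
    set C := gromovProd (γ a) (σ₂ t) (γ v) with hCdef
    set X := gromovProd (γ a) (σ₁ s) (γ v) with hXdef
    have hA : |a| + 2 * δ + 1 ≤ A := by
      have hd1' : dist (γ (-u)) (σ₁ s) ≤ H₁ := by rwa [dist_comm] at hdu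
      simp only [hAdef, gromovProd, dwu]
      linarith
    have hC : |a| + 2 * δ + 1 ≤ C := by
      simp only [hCdef, gromovProd, dist_comm (γ a) (σ₂ t), dwv]
      have : dist (σ₂ t) (γ v) ≤ H₂ := hdv
      linarith [dist_comm (σ₂ t) (γ a)]
    have hzero : gromovProd (γ a) (γ (-u)) (γ v) = 0 := by
      simp only [gromovProd, dwu, dwv, hγ (-u) v]
      rw [abs_of_pos hau, abs_of_neg (by linarith : a - v < 0),
        abs_of_neg (by linarith : -u - v < 0)]
      ring
    have hyp1 := hhyp (γ (-u)) (γ a) (σ₁ s) (γ v)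
    have hyp2 := hhyp (σ₁ s) (γ a) (σ₂ t) (γ v)
    rw [hzero] at hyp1
    have hX : X ≤ δ := by
      rcases min_le_iff.mp (by linarith : min A X ≤ δ) with h | h
      · linarith
      · exact h
    have hB : B ≤ 2 * δ := by
      rcases min_le_iff.mp (by linarith : min B C ≤ 2 * δ) with h | h
      · exact h
      · linarith
    simp only [hBdef, gromovProd] at hB
    simp only [gromovProd]
    have e1 : dist (γ a) (σ₁ s) = dist (σ₁ s) (γ a) := dist_comm _ _
    linarith
  -- lower bound for the liminf
  have hlow : (((b₁ + b₂) / 2 : ℝ) : EReal) ≤ extGP x σ₁ σ₂ := by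
    have hG : Filter.Tendsto
        (fun p : ℝ × ℝ =>
          ((((dist x (σ₁ p.1) - dist (γ a) (σ₁ p.1))
            + (dist x (σ₂ p.2) - dist (γ a) (σ₂ p.2))) / 2 : ℝ) : EReal))
        (Filter.atTop ×ˢ Filter.atTop) (nhds (((b₁ + b₂) / 2 : ℝ) : EReal)) := by
      apply EReal.tendsto_coe.mpr
      exact ((hb₁.comp Filter.tendsto_fst).add (hb₂.comp Filter.tendsto_snd)).div_const 2
    have hle : ∀ p : ℝ × ℝ,
        ((((dist x (σ₁ p.1) - dist (γ a) (σ₁ p.1))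
          + (dist x (σ₂ p.2) - dist (γ a) (σ₂ p.2))) / 2 : ℝ) : EReal)
          ≤ ((gromovProd x (σ₁ p.1) (σ₂ p.2) : ℝ) : EReal) := by
      intro p
      apply EReal.coe_le_coe_iff.mpr
      simp only [gromovProd]
      linarith [dist_triangle (σ₁ p.1) (γ a) (σ₂ p.2), dist_comm (σ₁ p.1) (γ a)]
    calc (((b₁ + b₂) / 2 : ℝ) : EReal)
        = Filter.liminf
            (fun p : ℝ × ℝ =>
              ((((dist x (σ₁ p.1) - dist (γ a) (σ₁ p.1))
                + (dist x (σ₂ p.2) - dist (γ a) (σ₂ p.2))) / 2 : ℝ) : EReal))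
            (Filter.atTop ×ˢ Filter.atTop) := (hG.liminf_eq).symm
      _ ≤ extGP x σ₁ σ₂ := by
          unfold extGP
          exact Filter.liminf_le_liminf (Filter.Eventually.of_forall hle)
  -- upper bound for the liminf
  have hup : extGP x σ₁ σ₂ ≤ (((b₁ + b₂) / 2 + 2 * δ : ℝ) : EReal) := by
    have hH : Filter.Tendsto
        (fun p : ℝ × ℝ =>
          ((((dist x (σ₁ p.1) - dist (γ a) (σ₁ p.1))
            + (dist x (σ₂ p.2) - dist (γ a) (σ₂ p.2))) / 2 + 2 * δ : ℝ) : EReal))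
        (Filter.atTop ×ˢ Filter.atTop) (nhds (((b₁ + b₂) / 2 + 2 * δ : ℝ) : EReal)) := by
      apply EReal.tendsto_coe.mpr
      exact (((hb₁.comp Filter.tendsto_fst).add
        (hb₂.comp Filter.tendsto_snd)).div_const 2).add_const (2 * δ)
    have hev : ∀ᶠ p : ℝ × ℝ in Filter.atTop ×ˢ Filter.atTop,
        ((gromovProd x (σ₁ p.1) (σ₂ p.2) : ℝ) : EReal)
          ≤ ((((dist x (σ₁ p.1) - dist (γ a) (σ₁ p.1))
            + (dist x (σ₂ p.2) - dist (γ a) (σ₂ p.2))) / 2 + 2 * δ : ℝ) : EReal) := by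
      filter_upwards [Filter.Eventually.prod_mk (Filter.eventually_ge_atTop S) (Filter.eventually_ge_atTop S)]
        with p hp
      exact EReal.coe_le_coe_iff.mpr (key p.1 p.2 hp.1 hp.2)
    calc extGP x σ₁ σ₂
        ≤ Filter.liminf
            (fun p : ℝ × ℝ =>
              ((((dist x (σ₁ p.1) - dist (γ a) (σ₁ p.1))
                + (dist x (σ₂ p.2) - dist (γ a) (σ₂ p.2))) / 2 + 2 * δ : ℝ) : EReal))
            (Filter.atTop ×ˢ Filter.atTop) := by
          unfold extGP
          exact Filter.liminf_le_liminf hev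
      _ = (((b₁ + b₂) / 2 + 2 * δ : ℝ) : EReal) := hH.liminf_eq
  refine ⟨?_, hlow⟩
  calc extGP x σ₁ σ₂ - ((42 * δ : ℝ) : EReal)
      ≤ (((b₁ + b₂) / 2 + 2 * δ : ℝ) : EReal) - ((42 * δ : ℝ) : EReal) :=
        EReal.sub_le_sub hup le_rfl
    _ = (((b₁ + b₂) / 2 + 2 * δ - 42 * δ : ℝ) : EReal) := by rw [← EReal.coe_sub]
    _ ≤ (((b₁ + b₂) / 2 : ℝ) : EReal) := EReal.coe_le_coe_iff.mpr (by linarith)
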